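/- Let O, A, B, C, D be points in the plane ℝ². If the oriented triangles (A,O,B), (A,O,D), (B,O,C), (C,O,D) all have positive orientation, then (A,O,C) has positive orientation if and only if (B,O,D) has positive orientation. -/
import Mathlib

/-- 2×2 determinant of two vectors in ℝ². -/
def det2 (u v : ℝ × ℝ) : ℝ := u.1 * v.2 - u.2 * v.1

/-- Orientation of an ordered triple of points in ℝ². -/
def ori (A B C : ℝ × ℝ) : ℝ := det2 (B - A) (C - B)

theorem stmt0 (O A B C D : ℝ × ℝ)
    (hAOB : 0 < ori A O B) (hAOD : 0 < ori A O D)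
    (hBOC : 0 < ori B O C) (hCOD : 0 < ori C O D) :
    0 < ori A O C ↔ 0 < ori B O D := by
  have key : ori A O C * ori B O D =
      ori A O B * ori C O D + ori A O D * ori B O C := by
    simp only [ori, det2, Prod.fst_sub, Prod.snd_sub]
    ring
  have hpos : 0 < ori A O C * ori B O D := by
    rw [key]; positivity
  constructor
  · intro h
    rcases mul_pos_iff.mp hpos with ⟨_, h2⟩ | ⟨h1, _⟩
    · exact h2
    · exact absurd h (not_lt.mpr h1.le)
  · intro h
    rcases mul_pos_iff.mp hpos with ⟨h1, _⟩ | ⟨_, h2⟩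
    · exact h1
    · exact absurd h (not_lt.mpr h2.le)
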